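/- If a sphere S^{n-1} ⊂ ℝ^n is sliced by k hyperplanes through the origin such that every subset of n of the hyperplanes has linearly independent normal vectors, then the hyperplanes divide the sphere into exactly r(n,k) = 2·∑_{i=0}^{n-1} C(k-1, i) connected regions. -/

import Mathlib

open Finset

noncomputable section

local notation "⟪" x ", " y "⟫" => @inner ℝ _ _ x y

namespace SchlaefliAux

def eps (b : Bool) : ℝ := if b then 1 else -1

def Rz {m : ℕ} {E : Type} [NormedAddCommGroup E] [InnerProductSpace ℝ E]
    (a : Fin m → E) (σ : Fin m → Bool) : Prop :=
  ∃ x : E, ∀ j, 0 < eps (σ j) * ⟪a j, x⟫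

def Spz {k : ℕ} {E : Type} [NormedAddCommGroup E] [InnerProductSpace ℝ E]
    (a : Fin (k + 1) → E) (σ' : Fin k → Bool) : Prop :=
  ∃ x : E, ⟪a (Fin.last k), x⟫ = 0 ∧ ∀ j : Fin k, 0 < eps (σ' j) * ⟪a j.castSucc, x⟫




lemma eps_pos_iff {b : Bool} {y : ℝ} : 0 < eps b * y ↔ (if b then 0 < y else y < 0) := by
  cases b
  · show 0 < -1 * y ↔ y < 0
    constructor <;> intro h <;> linarith
  · show 0 < 1 * y ↔ 0 < y
    rw [one_mul]

variable {E : Type} [NormedAddCommGroup E] [InnerProductSpace ℝ E]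

lemma seg_pos {p q t : ℝ} (hp : 0 < p) (hq : 0 < q) (h0 : 0 ≤ t) (h1 : t ≤ 1) :
    0 < (1 - t) * p + t * q := by
  rcases eq_or_lt_of_le h0 with h | h
  · rw [← h]; simpa using hp
  · have := mul_pos h hq
    have := mul_nonneg (by linarith : (0:ℝ) ≤ 1 - t) hp.le
    linarith

lemma eps_inner_comb (b : Bool) (v x y : E) {t : ℝ} (h0 : 0 ≤ t) (h1 : t ≤ 1)
    (hx : 0 < eps b * ⟪v, x⟫) (hy : 0 < eps b * ⟪v, y⟫) :
    0 < eps b * ⟪v, (1 - t) • x + t • y⟫ := by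
  rw [inner_add_right, real_inner_smul_right, real_inner_smul_right]
  calc (0:ℝ) < (1 - t) * (eps b * ⟪v, x⟫) + t * (eps b * ⟪v, y⟫) := seg_pos hx hy h0 h1
  _ = eps b * ((1 - t) * ⟪v, x⟫ + t * ⟪v, y⟫) := by ring

lemma perturb {k : ℕ} (a : Fin k → E) (σ : Fin k → Bool) (x w : E)
    (hx : ∀ j, 0 < eps (σ j) * ⟪a j, x⟫) :
    ∃ t : ℝ, 0 < t ∧ ∀ c : ℝ, |c| < t → ∀ j, 0 < eps (σ j) * ⟪a j, x + c • w⟫ := by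
  have h : ∀ᶠ c : ℝ in nhds 0, ∀ j, 0 < eps (σ j) * ⟪a j, x + c • w⟫ := by
    rw [Filter.eventually_all]
    intro j
    have hc : Continuous fun c : ℝ => eps (σ j) * ⟪a j, x + c • w⟫ := by
      simp only [inner_add_right, real_inner_smul_right]
      fun_prop
    have h0 : 0 < eps (σ j) * ⟪a j, x + (0 : ℝ) • w⟫ := by simpa using hx j
    exact (hc.tendsto 0).eventually (eventually_gt_nhds h0)
  rw [Metric.eventually_nhds_iff] at h
  obtain ⟨t, ht, h⟩ := h
  exact ⟨t, ht, fun c hc => h (by simpa [Real.dist_0_eq_abs] using hc)⟩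

lemma split_of_both {k : ℕ} (a : Fin k → E) (σ : Fin k → Bool) (w x y : E)
    (hx : ∀ j, 0 < eps (σ j) * ⟪a j, x⟫) (hy : ∀ j, 0 < eps (σ j) * ⟪a j, y⟫)
    (hwx : ⟪w, x⟫ < 0) (hwy : 0 < ⟪w, y⟫) :
    ∃ z, ⟪w, z⟫ = 0 ∧ ∀ j, 0 < eps (σ j) * ⟪a j, z⟫ := by
  set f : ℝ → ℝ := fun t => ⟪w, (1 - t) • x + t • y⟫ with hfdef
  have hf : Continuous f := by
    simp only [hfdef, inner_add_right, real_inner_smul_right]; fun_prop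
  have hmem : (0 : ℝ) ∈ Set.Icc (f 0) (f 1) := by
    constructor <;> simp [hfdef] <;> linarith
  obtain ⟨t, ht, hft⟩ := intermediate_value_Icc zero_le_one hf.continuousOn hmem
  exact ⟨(1 - t) • x + t • y, hft, fun j => eps_inner_comb _ _ _ _ ht.1 ht.2 (hx j) (hy j)⟩



variable {E' : Type} [NormedAddCommGroup E'] [InnerProductSpace ℝ E']

lemma eps_eq_decide {b : Bool} {y : ℝ} (h : 0 < eps b * y) : b = decide (0 < y) := by
  have h' := eps_pos_iff.1 h
  cases b
  · simp only [if_false, Bool.false_eq_true] at h' ⊢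
    simp [not_lt.2 (le_of_lt h')]
  · simp only [if_true] at h' ⊢
    simp [h']

lemma inner_self_pos' {v : E'} (hv : v ≠ 0) : 0 < ⟪v, v⟫ := by
  rw [real_inner_self_eq_norm_sq]
  exact pow_pos (norm_pos_iff.2 hv) 2

lemma natCard_subtype {α : Type*} [Fintype α] (P : α → Prop) [DecidablePred P] :
    Nat.card {x // P x} = (univ.filter P).card := by
  simp [Nat.card_eq_fintype_card, Fintype.card_subtype]

variable {E : Type} [NormedAddCommGroup E] [InnerProductSpace ℝ E]

lemma nonzero_of_hyp {k n : ℕ} (hn : 1 ≤ n) (a : Fin k → E)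
    (ha : ∀ f : Fin k → ℝ, (univ.filter fun j => f j ≠ 0).card ≤ n →
      ∑ j, f j • a j = 0 → ∀ j, f j = 0)
    (j : Fin k) : a j ≠ 0 := by
  classical
  intro h
  have h1 : (univ.filter fun i => (if i = j then (1:ℝ) else 0) ≠ 0) = {j} := by
    ext i; by_cases h' : i = j <;> simp [h']
  have h2 : ∑ i, (if i = j then (1:ℝ) else 0) • a i = 0 := by
    simp [ite_smul, Finset.sum_ite_eq', h]
  have := ha _ (by rw [h1]; simpa using hn) h2 j
  simp at this

lemma count_base {n : ℕ} (hn : 1 ≤ n) (a : Fin 1 → E) (ha : ∀ j, a j ≠ 0) :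
    Nat.card {σ : Fin 1 → Bool // Rz a σ} = 2 := by
  classical
  have hall : ∀ σ : Fin 1 → Bool, Rz a σ := by
    intro σ
    show ∃ x : E, ∀ j, 0 < eps (σ j) * ⟪a j, x⟫
    refine ⟨eps (σ 0) • a 0, fun j => ?_⟩
    have hj : j = 0 := Subsingleton.elim _ _
    subst hj
    rw [real_inner_smul_right]
    have h0 : (0:ℝ) < ⟪a 0, a 0⟫ := inner_self_pos' (ha 0)
    have : eps (σ 0) * (eps (σ 0) * ⟪a 0, a 0⟫) = ⟪a 0, a 0⟫ := by
      cases σ 0 <;> simp [eps] <;> ring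
    rw [this]; exact h0
  rw [natCard_subtype, filter_true_of_mem (fun σ _ => hall σ), card_univ]
  simp

lemma count_dim_one [FiniteDimensional ℝ E] {k : ℕ} (hk : 1 ≤ k)
    (hdim : Module.finrank ℝ E = 1) (a : Fin k → E) (ha : ∀ j, a j ≠ 0) :
    Nat.card {σ : Fin k → Bool // Rz a σ} = 2 := by
  classical
  obtain ⟨v, hv, hspan⟩ := finrank_eq_one_iff'.1 hdim
  have hvv : (0:ℝ) < ⟪v, v⟫ := inner_self_pos' hv
  have hav : ∀ j, ⟪a j, v⟫ ≠ 0 := by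
    intro j
    obtain ⟨c, hc⟩ := hspan (a j)
    have hc0 : c ≠ 0 := by rintro rfl; simp at hc; exact ha j hc.symm
    rw [← hc, real_inner_smul_left]
    exact mul_ne_zero hc0 (ne_of_gt hvv)
  set A : Fin k → Bool := fun j => decide (0 < ⟪a j, v⟫) with hA
  set B : Fin k → Bool := fun j => !(A j) with hB
  have hAB : A ≠ B := by
    intro h
    have := congrFun h ⟨0, hk⟩
    simp [hB] at this
  have hiff : ∀ σ : Fin k → Bool, Rz a σ ↔ (σ = A ∨ σ = B) := by
    intro σ
    constructor
    · rintro ⟨x, hx⟩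
      obtain ⟨c, hc⟩ := hspan x
      have hc0 : c ≠ 0 := by
        rintro rfl
        have := hx ⟨0, hk⟩
        simp at hc
        rw [← hc] at this
        simp [inner_zero_right] at this
      rcases hc0.lt_or_gt with hneg | hpos
      · right
        funext j
        have hd := eps_eq_decide (hx j)
        rw [hd, ← hc, real_inner_smul_right, hB, hA]
        rcases (hav j).lt_or_gt with h' | h'
        · have hp : 0 < c * ⟪a j, v⟫ := mul_pos_of_neg_of_neg hneg h'
          simp [hp, not_lt.2 h'.le]
        · have hp : c * ⟪a j, v⟫ < 0 := mul_neg_of_neg_of_pos hneg h'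
          simp [h', not_lt.2 hp.le]
      · left
        funext j
        have hd := eps_eq_decide (hx j)
        rw [hd, ← hc, real_inner_smul_right, hA]
        rcases (hav j).lt_or_gt with h' | h'
        · have hp : c * ⟪a j, v⟫ < 0 := mul_neg_of_pos_of_neg hpos h'
          simp [not_lt.2 hp.le, not_lt.2 h'.le]
        · have hp : 0 < c * ⟪a j, v⟫ := mul_pos hpos h'
          simp [hp, h']
    · rintro (rfl | rfl)
      · exact ⟨v, fun j => by
          rw [eps_pos_iff]
          rcases (hav j).lt_or_gt with h' | h' <;> simp [hA, h', not_lt.2 h'.le, asymm h']⟩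
      · exact ⟨-v, fun j => by
          rw [eps_pos_iff, inner_neg_right]
          rcases (hav j).lt_or_gt with h' | h' <;>
            simp [hB, hA, h', not_lt.2 h'.le, asymm h'] <;> linarith⟩
  rw [natCard_subtype]
  have : (univ.filter fun σ : Fin k → Bool => Rz a σ) = {A, B} := by
    ext σ; simp [hiff σ]
  rw [this, card_pair hAB]

lemma pascal_sum (m n' : ℕ) :
    ∑ i ∈ range (n' + 1), (m + 1).choose i
      = ∑ i ∈ range (n' + 1), m.choose i + ∑ i ∈ range n', m.choose i := by
  rw [Finset.sum_range_succ' (fun i => (m + 1).choose i),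
    Finset.sum_range_succ' (fun i => m.choose i)]
  simp only [Nat.choose_succ_succ, Finset.sum_add_distrib, Nat.choose_zero_right,
    Nat.succ_eq_add_one]
  omega



variable {E : Type} [NormedAddCommGroup E] [InnerProductSpace ℝ E]

lemma restrict_rz {k : ℕ} (a : Fin (k + 1) → E) (σ : Fin (k + 1) → Bool) (h : Rz a σ) :
    Rz (fun j : Fin k => a j.castSucc) (σ ∘ Fin.castSucc) := by
  obtain ⟨x, hx⟩ := h
  exact ⟨x, fun j => hx j.castSucc⟩

lemma spz_rz {k : ℕ} (a : Fin (k + 1) → E) (σ' : Fin k → Bool) (h : Spz a σ') :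
    Rz (fun j : Fin k => a j.castSucc) σ' := by
  obtain ⟨x, _, hx⟩ := h
  exact ⟨x, hx⟩

lemma both_iff_split {k : ℕ} (a : Fin (k + 1) → E) (hw : a (Fin.last k) ≠ 0)
    (σ' : Fin k → Bool) :
    (Rz a (Fin.snoc σ' true) ∧ Rz a (Fin.snoc σ' false)) ↔ Spz a σ' := by
  constructor
  · rintro ⟨⟨x, hx⟩, ⟨y, hy⟩⟩
    have hx' : ∀ j : Fin k, 0 < eps (σ' j) * ⟪a j.castSucc, x⟫ := fun j => by
      simpa [Fin.snoc_castSucc] using hx j.castSucc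
    have hy' : ∀ j : Fin k, 0 < eps (σ' j) * ⟪a j.castSucc, y⟫ := fun j => by
      simpa [Fin.snoc_castSucc] using hy j.castSucc
    have hxl : 0 < ⟪a (Fin.last k), x⟫ := by
      have := hx (Fin.last k)
      rw [Fin.snoc_last, eps_pos_iff] at this
      simpa using this
    have hyl : ⟪a (Fin.last k), y⟫ < 0 := by
      have := hy (Fin.last k)
      rw [Fin.snoc_last, eps_pos_iff] at this
      simpa using this
    obtain ⟨z, hz0, hz⟩ := split_of_both (fun j : Fin k => a j.castSucc) σ'
      (a (Fin.last k)) y x hy' hx' hyl hxl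
    exact ⟨z, hz0, hz⟩
  · rintro ⟨x, hx0, hx⟩
    obtain ⟨t, ht, hpt⟩ := perturb (fun j : Fin k => a j.castSucc) σ' x (a (Fin.last k)) hx
    have hww : 0 < ⟪a (Fin.last k), a (Fin.last k)⟫ := inner_self_pos' hw
    have habs : |t / 2| < t := by rw [abs_of_pos (by linarith)]; linarith
    have habs' : |-(t / 2)| < t := by rw [abs_neg, abs_of_pos (by linarith)]; linarith
    constructor
    · refine ⟨x + (t / 2) • a (Fin.last k), fun j => ?_⟩
      cases j using Fin.lastCases with
      | last =>
        rw [Fin.snoc_last, inner_add_right, real_inner_smul_right, hx0, zero_add, eps_pos_iff]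
        have : 0 < t / 2 * ⟪a (Fin.last k), a (Fin.last k)⟫ :=
          mul_pos (by linarith) hww
        simpa using this
      | cast i =>
        rw [Fin.snoc_castSucc]
        exact hpt (t / 2) habs i
    · refine ⟨x + (-(t / 2)) • a (Fin.last k), fun j => ?_⟩
      cases j using Fin.lastCases with
      | last =>
        rw [Fin.snoc_last, inner_add_right, real_inner_smul_right, hx0, zero_add, eps_pos_iff]
        have : 0 < t / 2 * ⟪a (Fin.last k), a (Fin.last k)⟫ :=
          mul_pos (by linarith) hww
        simp only [if_false, Bool.false_eq_true]
        nlinarith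
      | cast i =>
        rw [Fin.snoc_castSucc]
        exact hpt (-(t / 2)) habs' i

lemma ext_exists {k : ℕ} (a : Fin (k + 1) → E) (hw : a (Fin.last k) ≠ 0) (σ' : Fin k → Bool)
    (h : Rz (fun j : Fin k => a j.castSucc) σ') :
    Rz a (Fin.snoc σ' true) ∨ Rz a (Fin.snoc σ' false) := by
  obtain ⟨x, hx⟩ := h
  rcases lt_trichotomy (⟪a (Fin.last k), x⟫) 0 with h0 | h0 | h0
  · refine Or.inr ⟨x, fun j => ?_⟩
    cases j using Fin.lastCases with
    | last =>
      rw [Fin.snoc_last, eps_pos_iff]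
      simpa using h0
    | cast i => rw [Fin.snoc_castSucc]; exact hx i
  · exact Or.inl (((both_iff_split a hw σ').2 ⟨x, h0, hx⟩).1)
  · refine Or.inl ⟨x, fun j => ?_⟩
    cases j using Fin.lastCases with
    | last =>
      rw [Fin.snoc_last, eps_pos_iff]
      simpa using h0
    | cast i => rw [Fin.snoc_castSucc]; exact hx i

lemma eq_snoc {k : ℕ} {σ : Fin (k + 1) → Bool} {σ' : Fin k → Bool}
    (h : σ ∘ Fin.castSucc = σ') : σ = Fin.snoc σ' (σ (Fin.last k)) := by
  subst h
  funext i
  cases i using Fin.lastCases with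
  | last => rw [Fin.snoc_last]
  | cast i => rw [Fin.snoc_castSucc]; rfl

lemma snoc_ne {k : ℕ} (σ' : Fin k → Bool) :
    Fin.snoc σ' true ≠ (Fin.snoc σ' false : Fin (k + 1) → Bool) := by
  intro h
  have := congrFun h (Fin.last k)
  rw [Fin.snoc_last, Fin.snoc_last] at this
  exact Bool.noConfusion this

lemma step_card {k : ℕ} (a : Fin (k + 1) → E) (hw : a (Fin.last k) ≠ 0) :
    Nat.card {σ : Fin (k + 1) → Bool // Rz a σ}
      = Nat.card {σ' : Fin k → Bool // Rz (fun j : Fin k => a j.castSucc) σ'}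
        + Nat.card {σ' : Fin k → Bool // Spz a σ'} := by
  classical
  rw [natCard_subtype, natCard_subtype, natCard_subtype]
  set a' : Fin k → E := fun j => a j.castSucc with ha'
  have hmaps : ∀ σ ∈ univ.filter (Rz a),
      σ ∘ Fin.castSucc ∈ univ.filter (Rz a') := by
    intro σ hσ
    rw [mem_filter] at hσ ⊢
    exact ⟨mem_univ _, restrict_rz a σ hσ.2⟩
  rw [Finset.card_eq_sum_card_fiberwise hmaps]
  have hfib : ∀ σ' ∈ univ.filter (Rz a'),
      ((univ.filter (Rz a)).filter fun σ => σ ∘ Fin.castSucc = σ').card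
        = if Spz a σ' then 2 else 1 := by
    intro σ' hσ'
    rw [mem_filter] at hσ'
    by_cases hSp : Spz a σ'
    · have hboth := (both_iff_split a hw σ').2 hSp
      have : ((univ.filter (Rz a)).filter fun σ => σ ∘ Fin.castSucc = σ')
          = {Fin.snoc σ' true, Fin.snoc σ' false} := by
        ext σ
        simp only [mem_filter, mem_univ, true_and, mem_insert, mem_singleton]
        constructor
        · rintro ⟨hR, hres⟩
          rcases Bool.eq_false_or_eq_true (σ (Fin.last k)) with hb | hb
          · left; rw [eq_snoc hres, hb]
          · right; rw [eq_snoc hres, hb]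
        · rintro (rfl | rfl)
          · exact ⟨hboth.1, by funext i; simp [Fin.snoc_castSucc]⟩
          · exact ⟨hboth.2, by funext i; simp [Fin.snoc_castSucc]⟩
      rw [this, card_pair (snoc_ne σ'), if_pos hSp]
    · rw [if_neg hSp]
      rcases ext_exists a hw σ' hσ'.2 with hT | hT
      · have hnF : ¬ Rz a (Fin.snoc σ' false) := fun hF =>
          hSp ((both_iff_split a hw σ').1 ⟨hT, hF⟩)
        have : ((univ.filter (Rz a)).filter fun σ => σ ∘ Fin.castSucc = σ')
            = {Fin.snoc σ' true} := by
          ext σ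
          simp only [mem_filter, mem_univ, true_and, mem_singleton]
          constructor
          · rintro ⟨hR, hres⟩
            rcases Bool.eq_false_or_eq_true (σ (Fin.last k)) with hb | hb
            · rw [eq_snoc hres, hb]
            · exfalso; apply hnF; rw [eq_snoc hres, hb] at hR; exact hR
          · rintro rfl
            exact ⟨hT, by funext i; simp [Fin.snoc_castSucc]⟩
        rw [this, card_singleton]
      · have hnT : ¬ Rz a (Fin.snoc σ' true) := fun hF =>
          hSp ((both_iff_split a hw σ').1 ⟨hF, hT⟩)
        have : ((univ.filter (Rz a)).filter fun σ => σ ∘ Fin.castSucc = σ')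
            = {Fin.snoc σ' false} := by
          ext σ
          simp only [mem_filter, mem_univ, true_and, mem_singleton]
          constructor
          · rintro ⟨hR, hres⟩
            rcases Bool.eq_false_or_eq_true (σ (Fin.last k)) with hb | hb
            · exfalso; apply hnT; rw [eq_snoc hres, hb] at hR; exact hR
            · rw [eq_snoc hres, hb]
          · rintro rfl
            exact ⟨hT, by funext i; simp [Fin.snoc_castSucc]⟩
        rw [this, card_singleton]
  rw [Finset.sum_congr rfl hfib]
  have hsum : ∑ σ' ∈ univ.filter (Rz a'), (if Spz a σ' then 2 else 1)
      = (univ.filter (Rz a')).card + ((univ.filter (Rz a')).filter (Spz a)).card := by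
    calc ∑ σ' ∈ univ.filter (Rz a'), (if Spz a σ' then 2 else 1)
        = ∑ σ' ∈ univ.filter (Rz a'), (1 + if Spz a σ' then 1 else 0) := by
          refine Finset.sum_congr rfl fun σ' _ => ?_
          by_cases h : Spz a σ' <;> simp [h]
      _ = (univ.filter (Rz a')).card + ((univ.filter (Rz a')).filter (Spz a)).card := by
          rw [Finset.sum_add_distrib, Finset.sum_const, smul_eq_mul, mul_one]
          congr 1
          exact (Finset.card_filter _ _).symm
  rw [hsum]
  congr 1
  congr 1
  ext σ'
  simp only [mem_filter, mem_univ, true_and]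
  exact ⟨fun h => h.2, fun h => ⟨spz_rz a σ' h, h⟩⟩



variable {E : Type} [NormedAddCommGroup E] [InnerProductSpace ℝ E]

lemma sp_iff [FiniteDimensional ℝ E] {k : ℕ} (a : Fin (k + 1) → E) (σ' : Fin k → Bool) :
    Spz a σ' ↔ Rz (fun j : Fin k =>
      (Submodule.orthogonalProjectionOnto ((ℝ ∙ a (Fin.last k))ᗮ) (a j.castSucc))) σ' := by
  set w := a (Fin.last k) with hwdef
  set H : Submodule ℝ E := (ℝ ∙ w)ᗮ with hH
  have key : ∀ (j : Fin k) (y : H),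
      ⟪a j.castSucc, (y : E)⟫ = ⟪((Submodule.orthogonalProjectionOnto H (a j.castSucc) : H) : E), (y : E)⟫ := by
    intro j y
    have hmem : a j.castSucc - (Submodule.orthogonalProjectionOnto H (a j.castSucc) : E) ∈ Hᗮ :=
      Submodule.sub_starProjection_mem_orthogonal _
    have h0 : ⟪a j.castSucc - ((Submodule.orthogonalProjectionOnto H (a j.castSucc) : H) : E), (y : E)⟫ = 0 := by
      rw [real_inner_comm]
      exact Submodule.inner_right_of_mem_orthogonal y.2 hmem
    rw [inner_sub_left] at h0
    linarith
  constructor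
  · rintro ⟨x, hx0, hx⟩
    have hxH : x ∈ H := Submodule.mem_orthogonal_singleton_iff_inner_right.2 hx0
    refine ⟨⟨x, hxH⟩, fun j => ?_⟩
    rw [Submodule.coe_inner]
    rw [← key j ⟨x, hxH⟩]
    exact hx j
  · rintro ⟨y, hy⟩
    refine ⟨(y : E), Submodule.mem_orthogonal_singleton_iff_inner_right.1 y.2, fun j => ?_⟩
    rw [key j y]
    have := hy j
    rwa [Submodule.coe_inner] at this

lemma hyp_restrict {k n : ℕ} (a : Fin (k + 1) → E)
    (ha : ∀ f : Fin (k + 1) → ℝ, (univ.filter fun j => f j ≠ 0).card ≤ n →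
      ∑ j, f j • a j = 0 → ∀ j, f j = 0) :
    ∀ f : Fin k → ℝ, (univ.filter fun j => f j ≠ 0).card ≤ n →
      ∑ j, f j • a j.castSucc = 0 → ∀ j, f j = 0 := by
  classical
  intro f hcard hsum j
  have hF : ∑ i, (Fin.snoc f 0 : Fin (k + 1) → ℝ) i • a i = 0 := by
    rw [Fin.sum_univ_castSucc]
    simp only [Fin.snoc_castSucc, Fin.snoc_last, zero_smul, add_zero]
    exact hsum
  have hsub : (univ.filter fun i => (Fin.snoc f 0 : Fin (k + 1) → ℝ) i ≠ 0)
      ⊆ (univ.filter fun j => f j ≠ 0).map ⟨Fin.castSucc, Fin.castSucc_injective k⟩ := by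
    intro i hi
    rw [mem_filter] at hi
    rw [Finset.mem_map]
    cases i using Fin.lastCases with
    | last => simp [Fin.snoc_last] at hi
    | cast j =>
      refine ⟨j, ?_, rfl⟩
      rw [mem_filter]
      refine ⟨mem_univ _, ?_⟩
      simpa [Fin.snoc_castSucc] using hi.2
  have hcard' : (univ.filter fun i => (Fin.snoc f 0 : Fin (k + 1) → ℝ) i ≠ 0).card ≤ n := by
    calc _ ≤ ((univ.filter fun j => f j ≠ 0).map
        ⟨Fin.castSucc, Fin.castSucc_injective k⟩).card := Finset.card_le_card hsub
      _ = (univ.filter fun j => f j ≠ 0).card := Finset.card_map _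
      _ ≤ n := hcard
  have := ha _ hcard' hF j.castSucc
  simpa [Fin.snoc_castSucc] using this

lemma hyp_proj [FiniteDimensional ℝ E] {k n : ℕ} (hn : 1 ≤ n)
    (a : Fin (k + 1) → E) (hw : a (Fin.last k) ≠ 0)
    (ha : ∀ f : Fin (k + 1) → ℝ, (univ.filter fun j => f j ≠ 0).card ≤ n →
      ∑ j, f j • a j = 0 → ∀ j, f j = 0) :
    ∀ f : Fin k → ℝ, (univ.filter fun j => f j ≠ 0).card ≤ n - 1 →
      ∑ j, f j • (Submodule.orthogonalProjectionOnto ((ℝ ∙ a (Fin.last k))ᗮ) (a j.castSucc)) = 0 →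
      ∀ j, f j = 0 := by
  classical
  intro f hcard hsum j
  set w := a (Fin.last k) with hwdef
  set H : Submodule ℝ E := (ℝ ∙ w)ᗮ with hH
  set b : Fin k → H := fun i => Submodule.orthogonalProjectionOnto H (a i.castSucc) with hb
  have hHoo : Hᗮ = (ℝ ∙ w) := Submodule.orthogonal_orthogonal _
  have hmem : ∀ i : Fin k, a i.castSucc - (b i : E) ∈ (ℝ ∙ w) := fun i => by
    rw [← hHoo]; exact Submodule.sub_starProjection_mem_orthogonal _
  choose c hc using fun i => Submodule.mem_span_singleton.1 (hmem i)
  have ha_eq : ∀ i : Fin k, a i.castSucc = c i • w + (b i : E) := fun i =>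
    (sub_eq_iff_eq_add.1 (hc i).symm)
  set F : Fin (k + 1) → ℝ := Fin.snoc f (-(∑ i, f i * c i)) with hF
  have hcoe : ∑ i : Fin k, f i • (b i : E) = 0 := by
    have h0 : ((∑ i : Fin k, f i • b i : H) : E) = 0 := by rw [hsum]; rfl
    rw [← h0]
    push_cast
    rfl
  have hFsum : ∑ i, F i • a i = 0 := by
    rw [Fin.sum_univ_castSucc]
    have h1 : ∑ i : Fin k, F i.castSucc • a i.castSucc
        = ∑ i : Fin k, ((f i * c i) • w + f i • (b i : E)) := by
      refine Finset.sum_congr rfl fun i _ => ?_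
      rw [hF]
      simp only [Fin.snoc_castSucc]
      rw [ha_eq i, smul_add, smul_smul]
    rw [h1, Finset.sum_add_distrib, hcoe, add_zero, ← Finset.sum_smul]
    rw [hF]
    simp only [Fin.snoc_last]
    rw [neg_smul, add_neg_cancel]
  have hsub : (univ.filter fun i => F i ≠ 0) ⊆
      ((univ.filter fun i => f i ≠ 0).map ⟨Fin.castSucc, Fin.castSucc_injective k⟩)
        ∪ {Fin.last k} := by
    intro i hi
    rw [mem_filter] at hi
    rw [Finset.mem_union]
    cases i using Fin.lastCases with
    | last => right; exact mem_singleton_self _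
    | cast j =>
      left
      rw [Finset.mem_map]
      refine ⟨j, ?_, rfl⟩
      rw [mem_filter]
      refine ⟨mem_univ _, ?_⟩
      have := hi.2
      rw [hF] at this
      simpa [Fin.snoc_castSucc] using this
  have hcard' : (univ.filter fun i => F i ≠ 0).card ≤ n := by
    calc (univ.filter fun i => F i ≠ 0).card
        ≤ (((univ.filter fun i => f i ≠ 0).map
            ⟨Fin.castSucc, Fin.castSucc_injective k⟩) ∪ {Fin.last k}).card :=
          Finset.card_le_card hsub
      _ ≤ ((univ.filter fun i => f i ≠ 0).map
            ⟨Fin.castSucc, Fin.castSucc_injective k⟩).card + 1 :=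
          le_trans (Finset.card_union_le _ _) (by rw [Finset.card_singleton])
      _ = (univ.filter fun i => f i ≠ 0).card + 1 := by rw [Finset.card_map]
      _ ≤ (n - 1) + 1 := by omega
      _ ≤ n := by omega
  have := ha F hcard' hFsum j.castSucc
  rw [hF] at this
  simpa [Fin.snoc_castSucc] using this

theorem signCount (k : ℕ) : ∀ (_hk : 1 ≤ k) (n : ℕ) (_hn : 1 ≤ n)
    (E : Type) [NormedAddCommGroup E] [InnerProductSpace ℝ E] [FiniteDimensional ℝ E],
    Module.finrank ℝ E = n → ∀ (a : Fin k → E),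
    (∀ f : Fin k → ℝ, (Finset.univ.filter fun j => f j ≠ 0).card ≤ n →
      ∑ j, f j • a j = 0 → ∀ j, f j = 0) →
    Nat.card {σ : Fin k → Bool // Rz a σ} = 2 * ∑ i ∈ Finset.range n, (k - 1).choose i := by
  induction k with
  | zero => intro hk; exact absurd hk (by omega)
  | succ k IH =>
    intro _ n hn E _ _ _ hdim a ha
    rcases Nat.lt_or_ge n 2 with hn2 | hn2
    · -- n = 1
      have hn1 : n = 1 := by omega
      subst hn1
      rw [count_dim_one (k := k + 1) (by omega) hdim a (fun j => nonzero_of_hyp le_rfl a ha j)]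
      simp
    · rcases Nat.eq_zero_or_pos k with rfl | hk1
      · rw [count_base hn a (fun j => nonzero_of_hyp hn a ha j)]
        have hs : ∑ x ∈ range n, Nat.choose 0 x = 1 := by
          rw [Finset.sum_eq_single 0]
          · rfl
          · intro b _ hb
            exact Nat.choose_eq_zero_of_lt (by omega)
          · intro h
            exact absurd (Finset.mem_range.2 (by omega)) h
        simp [hs]
      · have hw : a (Fin.last k) ≠ 0 := nonzero_of_hyp hn a ha (Fin.last k)
        set H : Submodule ℝ E := (ℝ ∙ a (Fin.last k))ᗮ with hH
        have hrank : Module.finrank ℝ H = n - 1 := by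
          have h1 : Module.finrank ℝ (ℝ ∙ a (Fin.last k)) = 1 := finrank_span_singleton hw
          have h2 := Submodule.finrank_add_finrank_orthogonal (K := (ℝ ∙ a (Fin.last k)))
          rw [hdim, h1, ← hH] at h2
          omega
        have cnt1 := IH hk1 n hn E hdim (fun j => a j.castSucc) (hyp_restrict a ha)
        have cnt2 := IH hk1 (n - 1) (by omega) H hrank
          (fun j => Submodule.orthogonalProjectionOnto H (a j.castSucc)) (hyp_proj hn a hw ha)
        have hsp : Nat.card {σ' : Fin k → Bool // Spz a σ'}
            = Nat.card {σ' : Fin k → Bool //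
                Rz (fun j : Fin k => Submodule.orthogonalProjectionOnto H (a j.castSucc)) σ'} :=
          Nat.card_congr (Equiv.subtypeEquivRight (fun σ' => sp_iff a σ'))
        rw [step_card a hw, cnt1, hsp, cnt2]
        obtain ⟨m, rfl⟩ : ∃ m, k = m + 1 := ⟨k - 1, by omega⟩
        obtain ⟨n', rfl⟩ : ∃ n', n = n' + 1 := ⟨n - 1, by omega⟩
        simp only [Nat.add_sub_cancel]
        rw [pascal_sum m n', Nat.mul_add]



variable {E : Type} [NormedAddCommGroup E] [InnerProductSpace ℝ E]

lemma eps_self {y : ℝ} (hy : y ≠ 0) : 0 < eps (decide (0 < y)) * y := by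
  rcases hy.lt_or_gt with h | h
  · rw [eps_pos_iff]
    simp [not_lt.2 h.le, h]
  · rw [eps_pos_iff]
    simp [h]

lemma ne_zero_of_eps_pos {b : Bool} {y : ℝ} (h : 0 < eps b * y) : y ≠ 0 := by
  rw [eps_pos_iff] at h
  cases b <;> simp_all <;> intro h' <;> subst h' <;> simp at h <;> linarith

theorem cc_card {k : ℕ} (hk : 1 ≤ k) (a : Fin k → E) :
    Nat.card (ConnectedComponents {x : E | ‖x‖ = 1 ∧ ∀ j, ⟪a j, x⟫ ≠ 0})
      = Nat.card {σ : Fin k → Bool // Rz a σ} := by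
  classical
  set X : Set E := {x | ‖x‖ = 1 ∧ ∀ j, ⟪a j, x⟫ ≠ 0} with hXdef
  have hiX : ∀ x : X, ∀ j, ⟪a j, (x : E)⟫ ≠ 0 := fun x j => x.2.2 j
  set f : X → (Fin k → Bool) := fun x j => decide (0 < ⟪a j, (x : E)⟫) with hfdef
  have hcont : ∀ j : Fin k, Continuous fun x : X => ⟪a j, (x : E)⟫ :=
    fun j => Continuous.inner continuous_const continuous_subtype_val
  have hfc : Continuous f := by
    apply continuous_pi
    intro j
    have hlc : IsLocallyConstant (fun x : X => decide (0 < ⟪a j, (x : E)⟫)) := by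
      rw [IsLocallyConstant.iff_isOpen_fiber]
      intro b
      cases b
      · have heq : (fun x : X => decide (0 < ⟪a j, (x : E)⟫)) ⁻¹' {false}
            = {x : X | ⟪a j, (x : E)⟫ < 0} := by
          ext x
          simp only [Set.mem_preimage, Set.mem_singleton_iff, Set.mem_setOf_eq,
            decide_eq_false_iff_not, not_lt]
          constructor
          · intro h
            exact lt_of_le_of_ne h (hiX x j)
          · intro h
            exact h.le
        rw [heq]
        exact isOpen_lt (hcont j) continuous_const
      · have heq : (fun x : X => decide (0 < ⟪a j, (x : E)⟫)) ⁻¹' {true}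
            = {x : X | 0 < ⟪a j, (x : E)⟫} := by
          ext x
          simp only [Set.mem_preimage, Set.mem_singleton_iff, Set.mem_setOf_eq,
            decide_eq_true_eq]
        rw [heq]
        exact isOpen_lt continuous_const (hcont j)
    exact hlc.continuous
  set g : ConnectedComponents X → (Fin k → Bool) := hfc.connectedComponentsLift with hgdef
  have hgmk : ∀ x : X, g (ConnectedComponents.mk x) = f x := fun x =>
    hfc.connectedComponentsLift_apply_coe x
  -- every point of X has positive eps-sign products for its own sign vector
  have hself : ∀ x : X, ∀ j, 0 < eps (f x j) * ⟪a j, (x : E)⟫ := by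
    intro x j
    exact eps_self (hiX x j)
  -- joining two points with the same sign vector
  have hjoin : ∀ x y : X, f x = f y →
      connectedComponent x = connectedComponent y := by
    intro x y hxy
    have hsx : ∀ j, 0 < eps (f x j) * ⟪a j, (x : E)⟫ := hself x
    have hsy : ∀ j, 0 < eps (f x j) * ⟪a j, (y : E)⟫ := by
      intro j
      rw [hxy]
      exact hself y j
    set c : ℝ → E := fun t => (1 - t) • (x : E) + t • (y : E) with hcdef
    have hcpos : ∀ t : ℝ, 0 ≤ t → t ≤ 1 → ∀ j, 0 < eps (f x j) * ⟪a j, c t⟫ := by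
      intro t h0 h1 j
      exact eps_inner_comb _ _ _ _ h0 h1 (hsx j) (hsy j)
    have hcnz : ∀ t : ℝ, 0 ≤ t → t ≤ 1 → c t ≠ 0 := by
      intro t h0 h1 hzero
      have := hcpos t h0 h1 ⟨0, hk⟩
      rw [hzero, inner_zero_right, mul_zero] at this
      exact lt_irrefl 0 this
    have hnormpos : ∀ t : unitInterval, (0:ℝ) < ‖c (t : ℝ)‖ := fun t =>
      norm_pos_iff.2 (hcnz t t.2.1 t.2.2)
    have hccont : Continuous fun t : unitInterval => c (t : ℝ) := by
      simp only [hcdef]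
      fun_prop
    have hγcont : Continuous fun t : unitInterval => (‖c (t : ℝ)‖)⁻¹ • c (t : ℝ) := by
      refine Continuous.smul ?_ hccont
      exact (hccont.norm.inv₀ (fun t => (hnormpos t).ne'))
    have hγmem : ∀ t : unitInterval, (‖c (t : ℝ)‖)⁻¹ • c (t : ℝ) ∈ X := by
      intro t
      constructor
      · rw [norm_smul, norm_inv, norm_norm]
        exact inv_mul_cancel₀ (hnormpos t).ne'
      · intro j
        rw [real_inner_smul_right]
        refine mul_ne_zero (inv_ne_zero (hnormpos t).ne') ?_
        exact ne_zero_of_eps_pos (hcpos t t.2.1 t.2.2 j)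
    have hx1 : ‖(x : E)‖ = 1 := x.2.1
    have hy1 : ‖(y : E)‖ = 1 := y.2.1
    have hpath : Joined x y := by
      refine ⟨⟨⟨fun t => ⟨(‖c (t : ℝ)‖)⁻¹ • c (t : ℝ), hγmem t⟩, ?_⟩, ?_, ?_⟩⟩
      · exact Continuous.subtype_mk hγcont _
      · apply Subtype.ext
        show (‖c 0‖)⁻¹ • c 0 = (x : E)
        simp only [hcdef]
        norm_num [hx1]
      · apply Subtype.ext
        show (‖c 1‖)⁻¹ • c 1 = (y : E)
        simp only [hcdef]
        norm_num [hy1]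
    exact connectedComponent_eq (pathComponent_subset_component _ hpath)
  have hginj : Function.Injective g := by
    intro u v huv
    obtain ⟨x, rfl⟩ := ConnectedComponents.surjective_coe u
    obtain ⟨y, rfl⟩ := ConnectedComponents.surjective_coe v
    rw [show (ConnectedComponents.mk x) = (x : ConnectedComponents X) from rfl] at *
    rw [hgmk x, hgmk y] at huv
    rw [ConnectedComponents.coe_eq_coe]
    exact hjoin x y huv
  have hrange : Set.range g = {σ | Rz a σ} := by
    ext σ
    constructor
    · rintro ⟨u, rfl⟩
      obtain ⟨x, rfl⟩ := ConnectedComponents.surjective_coe u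
      rw [hgmk x]
      exact ⟨(x : E), hself x⟩
    · rintro ⟨x, hx⟩
      have hx0 : x ≠ 0 := by
        intro h
        have := hx ⟨0, hk⟩
        rw [h, inner_zero_right, mul_zero] at this
        exact lt_irrefl 0 this
      have hnx : (0:ℝ) < ‖x‖ := norm_pos_iff.2 hx0
      have hmem : ‖x‖⁻¹ • x ∈ X := by
        constructor
        · rw [norm_smul, norm_inv, norm_norm]
          exact inv_mul_cancel₀ hnx.ne'
        · intro j
          rw [real_inner_smul_right]
          exact mul_ne_zero (inv_ne_zero hnx.ne') (ne_zero_of_eps_pos (hx j))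
      refine ⟨ConnectedComponents.mk ⟨‖x‖⁻¹ • x, hmem⟩, ?_⟩
      rw [hgmk]
      funext j
      show decide (0 < ⟪a j, ‖x‖⁻¹ • x⟫) = σ j
      rw [real_inner_smul_right]
      rw [eps_eq_decide (hx j)]
      apply decide_eq_decide.2
      constructor
      · intro h
        have h2 : (0:ℝ) < ‖x‖ * (‖x‖⁻¹ * ⟪a j, x⟫) := mul_pos hnx h
        rwa [← mul_assoc, mul_inv_cancel₀ hnx.ne', one_mul] at h2
      · intro h
        exact mul_pos (inv_pos.2 hnx) h
  have h1 : Nat.card (ConnectedComponents X) = Nat.card (Set.range g) :=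
    (Nat.card_range_of_injective hginj).symm
  rw [h1, hrange]
  rfl


variable {E'' : Type} [NormedAddCommGroup E''] [InnerProductSpace ℝ E'']

lemma hyp_of_indep {k n : ℕ} (a : Fin k → E'')
    (hindep : ∀ s : Finset (Fin k), s.card ≤ n → LinearIndependent ℝ (fun i : s => a i)) :
    ∀ f : Fin k → ℝ, (univ.filter fun j => f j ≠ 0).card ≤ n →
      ∑ j, f j • a j = 0 → ∀ j, f j = 0 := by
  classical
  intro f hcard hsum j
  by_cases hj : f j = 0
  · exact hj
  · exfalso
    set s : Finset (Fin k) := univ.filter fun j => f j ≠ 0 with hs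
    have hji : j ∈ s := mem_filter.2 ⟨mem_univ _, hj⟩
    have hli := hindep s hcard
    have hsub : ∑ i ∈ s, f i • a i = 0 := by
      rw [← hsum]
      apply Finset.sum_subset (Finset.subset_univ s)
      intro x _ hx
      have hfx : f x = 0 := by
        by_contra hfx
        exact hx (mem_filter.2 ⟨mem_univ _, hfx⟩)
      rw [hfx, zero_smul]
    have hsum' : ∑ i : {x // x ∈ s}, f i • a i = 0 := by
      rw [← hsub]
      exact Finset.sum_coe_sort s (fun i => f i • a i)
    have := Fintype.linearIndependent_iff.1 hli (fun i => f (i : Fin k)) hsum' ⟨j, hji⟩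
    exact hj this

end SchlaefliAux

theorem sphere_slicing_count (n k : ℕ) (hn : 1 ≤ n) (hk : 1 ≤ k)
    (a : Fin k → EuclideanSpace ℝ (Fin n)) (ha : ∀ j, a j ≠ 0)
    (hindep : ∀ s : Finset (Fin k), s.card ≤ n →
      LinearIndependent ℝ (fun i : s => a i)) :
    Nat.card (ConnectedComponents
      {x : EuclideanSpace ℝ (Fin n) | ‖x‖ = 1 ∧ ∀ j, inner ℝ (a j) x ≠ (0 : ℝ)}) =
      2 * ∑ i ∈ Finset.range n, (k - 1).choose i := by
  classical
  rw [SchlaefliAux.cc_card hk a]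
  exact SchlaefliAux.signCount k hk n hn (EuclideanSpace ℝ (Fin n))
    (by simp) a (SchlaefliAux.hyp_of_indep a hindep)
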